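/- Let C be a locally noetherian Grothendieck category and U, V two 'weakly open' localizations of C: quotients j^*: C → Mod U, i^*: C → Mod V by localizing subcategories T_U, T_V, realized as the full subcategories of C of local objects. Define U ∩ V as the quotient of C by the smallest localizing subcategory containing T_U and T_V, realized as its full subcategory of local objects. Then an object M of C is local for U ∩ V if and only if it is local for both U and V; i.e., Mod(U ∩ V) = Mod U ∩ Mod V as full subcategories of C. -/

import Mathlib

open CategoryTheory CategoryTheory.Limits

universe v u

namespace NCSpaces

variable {C : Type u} [Category.{v} C]

/-- A full subcategory (given by a set of objects) is a *localizing subcategory* if it is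
closed under isomorphisms, subobjects, quotient objects, extensions, and filtered
colimits. -/
structure IsLocalizing [Abelian C] (T : Set C) : Prop where
  mem_of_iso : ∀ {X Y : C}, (X ≅ Y) → X ∈ T → Y ∈ T
  mem_of_mono : ∀ {X Y : C} (f : X ⟶ Y), Mono f → Y ∈ T → X ∈ T
  mem_of_epi : ∀ {X Y : C} (f : X ⟶ Y), Epi f → X ∈ T → Y ∈ T
  mem_of_extension : ∀ (S : ShortComplex C), S.ShortExact →
      S.X₁ ∈ T → S.X₃ ∈ T → S.X₂ ∈ T
  mem_of_colimit : ∀ (J : Type v) (_ : SmallCategory J) (_ : IsFiltered J) (F : J ⥤ C)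
      (c : Cocone F), IsColimit c → (∀ j, F.obj j ∈ T) → c.pt ∈ T

/-- `M` is a *local object* for the localizing subcategory `T` (i.e. `M ≅ j_* j^* M`):
it has no nonzero maps from torsion objects, and no essential extensions by torsion
objects — equivalently, every short exact sequence `0 → M → E → T → 0` with `T ∈ T`
splits. -/
def IsLocalObject [Abelian C] (T : Set C) (M : C) : Prop :=
  (∀ A ∈ T, ∀ f : A ⟶ M, f = 0) ∧
    (∀ (E : C) (f : M ⟶ E), Mono f → cokernel f ∈ T → ∃ r : E ⟶ M, f ≫ r = 𝟙 M)

section Aux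

variable [Abelian C]

/-- `Y` is a subquotient of `X`. -/
def SubQuot (Y X : C) : Prop := ∃ (Z : C) (i : Z ⟶ X) (e : Z ⟶ Y), Mono i ∧ Epi e

lemma SubQuot.refl (X : C) : SubQuot X X := ⟨X, 𝟙 X, 𝟙 X, inferInstance, inferInstance⟩

lemma SubQuot.trans {Y Z X : C} (h1 : SubQuot Y Z) (h2 : SubQuot Z X) : SubQuot Y X := by
  obtain ⟨A, i, e, hi, he⟩ := h1
  obtain ⟨B, i', e', hi', he'⟩ := h2
  haveI := hi; haveI := he; haveI := hi'; haveI := he'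
  exact ⟨pullback i e', pullback.snd i e' ≫ i', pullback.fst i e' ≫ e,
    mono_comp _ _, epi_comp _ _⟩

/-- Every short exact sequence `0 → M → E → X → 0` splits. -/
def QM (M X : C) : Prop := ∀ (E : C) (f : M ⟶ E) (g : E ⟶ X) (w : f ≫ g = 0),
  Mono f → Epi g → (ShortComplex.mk f g w).Exact → ∃ r : E ⟶ M, f ≫ r = 𝟙 M

/-- The class of objects all of whose subquotients admit no nonzero maps to `M` and all of
whose extensions by `M` split. -/
def Tstar (M : C) : Set C :=
  {X | ∀ Y : C, SubQuot Y X → (∀ f : Y ⟶ M, f = 0) ∧ QM M Y}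

/-- Pulling back a short exact sequence along an arbitrary map. -/
lemma kp {M E Z Y W : C} (f : M ⟶ E) (g : E ⟶ Z) (w : f ≫ g = 0)
    (hf : Mono f) (hg : Epi g) (hex : (ShortComplex.mk f g w).Exact)
    (t : Y ⟶ Z) (u : W ⟶ E) (v : W ⟶ Y) (comm : u ≫ g = v ≫ t)
    (hW : IsLimit (PullbackCone.mk u v comm))
    (m' : M ⟶ W) (hm'u : m' ≫ u = f) (hm'v : m' ≫ v = 0) :
    Mono m' ∧ Epi v ∧ (ShortComplex.mk m' v hm'v).Exact := by
  haveI := hf; haveI := hg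
  haveI hm' : Mono m' := by
    have : Mono (m' ≫ u) := by rw [hm'u]; infer_instance
    exact mono_of_mono m' u
  haveI hepi : Epi v := by
    have hcomp := IsLimit.conePointUniqueUpToIso_hom_comp hW (pullbackIsPullback g t)
      WalkingCospan.right
    have hv : (IsLimit.conePointUniqueUpToIso hW (pullbackIsPullback g t)).hom ≫
        pullback.snd g t = v := by simpa using hcomp
    exact Abelian.epi_snd_of_isLimit g t hW
  refine ⟨hm', hepi, ?_⟩
  apply ShortComplex.exact_of_f_is_kernel
  haveI : Mono (ShortComplex.mk f g w).f := hf
  refine KernelFork.IsLimit.ofι' m' hm'v (fun {A} k hk => ⟨hex.lift (k ≫ u) ?_, ?_⟩)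
  · show (k ≫ u) ≫ g = 0
    rw [Category.assoc, comm, ← Category.assoc, hk, zero_comp]
  · apply PullbackCone.IsLimit.hom_ext hW
    · show _ ≫ u = k ≫ u
      rw [Category.assoc, hm'u]
      exact hex.lift_f _ _
    · show _ ≫ v = k ≫ v
      rw [Category.assoc, hm'v, comp_zero, hk]

/-- Retractions of a short exact sequence whose cokernel has no nonzero maps to `M` are
unique. -/
lemma retr_unique {M E X : C} {f : M ⟶ E} {g : E ⟶ X} {w : f ≫ g = 0} (hg : Epi g)
    (hex : (ShortComplex.mk f g w).Exact) (hP : ∀ φ : X ⟶ M, φ = 0)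
    {r r' : E ⟶ M} (h : f ≫ r = 𝟙 M) (h' : f ≫ r' = 𝟙 M) : r = r' := by
  haveI : Epi (ShortComplex.mk f g w).g := hg
  have hw0 : (ShortComplex.mk f g w).f ≫ (r - r') = 0 := by
    show f ≫ (r - r') = 0
    rw [Preadditive.comp_sub, h, h', sub_self]
  have hd := hex.g_desc (r - r') hw0
  rw [hP (hex.desc (r - r') hw0), comp_zero] at hd
  exact sub_eq_zero.mp hd.symm

lemma exact_cok {M E : C} (f : M ⟶ E) :
    (ShortComplex.mk f (cokernel.π f) (cokernel.condition f)).Exact :=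
  ShortComplex.exact_of_g_is_cokernel _ (cokernelIsCokernel f)

lemma cok_iso {M E X : C} {f : M ⟶ E} {g : E ⟶ X} {w : f ≫ g = 0} (hg : Epi g)
    (hex : (ShortComplex.mk f g w).Exact) : Nonempty (cokernel f ≅ X) := by
  haveI : Epi (ShortComplex.mk f g w).g := hg
  exact ⟨IsColimit.coconePointUniqueUpToIso (cokernelIsCokernel f) hex.gIsCokernel⟩

lemma mono_snd_of_isLimit {X Y Zc W : C} {f : X ⟶ Zc} {g : Y ⟶ Zc} (hf : Mono f)
    {u : W ⟶ X} {v : W ⟶ Y} {comm : u ≫ f = v ≫ g}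
    (hW : IsLimit (PullbackCone.mk u v comm)) : Mono v := by
  rw [Preadditive.mono_iff_cancel_zero]
  intro T a ha
  haveI := hf
  have hu : a ≫ u = 0 := by
    apply zero_of_comp_mono f
    rw [Category.assoc, comm, ← Category.assoc, ha, zero_comp]
  exact PullbackCone.IsLimit.hom_ext hW (hu.trans zero_comp.symm) (ha.trans zero_comp.symm)

lemma isIso_fst_of_isLimit {X Y Zc W : C} {f : X ⟶ Zc} {g : Y ⟶ Zc} [IsIso g]
    {u : W ⟶ X} {v : W ⟶ Y} {comm : u ≫ f = v ≫ g}
    (hW : IsLimit (PullbackCone.mk u v comm)) : IsIso u := by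
  obtain ⟨ℓ, hl1, hl2⟩ := PullbackCone.IsLimit.lift' hW (𝟙 X) (f ≫ inv g) (by simp)
  simp only [PullbackCone.mk_fst, PullbackCone.mk_snd] at hl1 hl2
  refine ⟨ℓ, ?_, hl1⟩
  apply PullbackCone.IsLimit.hom_ext hW
  · show (u ≫ ℓ) ≫ u = 𝟙 W ≫ u
    erw [Category.assoc, hl1, Category.comp_id, Category.id_comp]
  · show (u ≫ ℓ) ≫ v = 𝟙 W ≫ v
    erw [Category.assoc, hl2, Category.id_comp, ← Category.assoc, comm, Category.assoc,
      IsIso.hom_inv_id, Category.comp_id]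

/-- The constant cocone on a filtered category is a colimit cocone. -/
noncomputable def constCoconeIsColimit (J : Type v) [SmallCategory J] [IsFiltered J] (X : C) :
    IsColimit (⟨X, 𝟙 _⟩ : Cocone ((Functor.const J).obj X)) := by
  haveI : Nonempty J := IsFiltered.nonempty
  exact
    { desc := fun s => s.ι.app (Classical.arbitrary J)
      fac := fun s j => by
        have h1 := s.ι.naturality (IsFiltered.leftToMax j (Classical.arbitrary J))
        have h2 := s.ι.naturality (IsFiltered.rightToMax j (Classical.arbitrary J))
        simp only [Functor.const_obj_obj, Functor.const_obj_map, Category.id_comp,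
          Category.comp_id] at h1 h2 ⊢
        rw [← h1, h2]
        simp
      uniq := fun s m hm => by simpa using hm (Classical.arbitrary J) }

variable [HasLimits C] [HasColimits C] [HasFilteredColimits C] [AB5 C]

/-- The key AB5 fact: for any `h : X ⟶ colim F` over a filtered diagram, `X` is the
filtered colimit of the pullbacks of the colimit cocone legs along `h`. -/
lemma master {J : Type v} [SmallCategory J] [IsFiltered J]
    (F : J ⥤ C) (c : Cocone F) (hc : IsColimit c) {X : C} (h : X ⟶ c.pt) :
    Nonempty (IsColimit (⟨X, pullback.fst ((Functor.const J).map h) c.ι⟩ :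
      Cocone (pullback ((Functor.const J).map h) c.ι))) := by
  constructor
  set η : (Functor.const J).obj X ⟶ (Functor.const J).obj c.pt := (Functor.const J).map h with hη
  let eF : colimit F ≅ c.pt := (colimit.isColimit F).coconePointUniqueUpToIso hc
  let eB : colimit ((Functor.const J).obj c.pt) ≅ c.pt :=
    (colimit.isColimit _).coconePointUniqueUpToIso (constCoconeIsColimit J c.pt)
  let eA : colimit ((Functor.const J).obj X) ≅ X :=
    (colimit.isColimit _).coconePointUniqueUpToIso (constCoconeIsColimit J X)
  have hζ : colim.map c.ι = eF.hom ≫ eB.inv := by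
    apply colimit.hom_ext
    intro j
    have h1 : colimit.ι F j ≫ eF.hom = c.ι.app j :=
      IsColimit.comp_coconePointUniqueUpToIso_hom _ _ j
    have h2 : colimit.ι ((Functor.const J).obj c.pt) j ≫ eB.hom = 𝟙 c.pt :=
      IsColimit.comp_coconePointUniqueUpToIso_hom (colimit.isColimit _)
        (constCoconeIsColimit J c.pt) j
    rw [colimit.ι_map, (Iso.comp_hom_eq_id eB).mp h2, ← Category.assoc, h1]
  haveI : IsIso (colim.map c.ι) := by rw [hζ]; infer_instance
  have hsq := isLimitOfHasPullbackOfPreservesLimit colim η c.ι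
  haveI hisofst : IsIso (colim.map (pullback.fst η c.ι)) := isIso_fst_of_isLimit hsq
  have hdesc : colimit.desc (pullback η c.ι)
      (⟨X, pullback.fst η c.ι⟩ : Cocone (pullback η c.ι)) =
      colim.map (pullback.fst η c.ι) ≫ eA.hom := by
    apply colimit.hom_ext
    intro j
    have h3 : colimit.ι ((Functor.const J).obj X) j ≫ eA.hom = 𝟙 X :=
      IsColimit.comp_coconePointUniqueUpToIso_hom (colimit.isColimit _)
        (constCoconeIsColimit J X) j
    rw [colimit.ι_desc, ← Category.assoc, colimit.ι_map, Category.assoc, h3]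
    simp
  haveI : IsIso ((colimit.isColimit (pullback η c.ι)).desc
      (⟨X, pullback.fst η c.ι⟩ : Cocone (pullback η c.ι))) := by
    rw [colimit.isColimit_desc, hdesc]; infer_instance
  exact IsColimit.ofPointIso (colimit.isColimit (pullback η c.ι))

lemma tstar_mono {M X X' : C} (f : X ⟶ X') (hf : Mono f) (hX' : X' ∈ Tstar M) :
    X ∈ Tstar M := by
  intro Y hY
  haveI := hf
  exact hX' Y (hY.trans ⟨X, f, 𝟙 X, inferInstance, inferInstance⟩)

lemma tstar_epi {M X X' : C} (f : X ⟶ X') (hf : Epi f) (hX : X ∈ Tstar M) :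
    X' ∈ Tstar M := by
  intro Y hY
  haveI := hf
  exact hX Y (hY.trans ⟨X, 𝟙 X, f, inferInstance, inferInstance⟩)

lemma tstar_iso {M X X' : C} (e : X ≅ X') (hX : X ∈ Tstar M) : X' ∈ Tstar M :=
  tstar_epi e.hom inferInstance hX

set_option maxHeartbeats 1000000 in
lemma tstar_ext {M : C} (S : ShortComplex C) (hS : S.ShortExact)
    (h1 : S.X₁ ∈ Tstar M) (h3 : S.X₃ ∈ Tstar M) : S.X₂ ∈ Tstar M := by
  intro Y hY
  obtain ⟨Z, i, e, hi, he⟩ := hY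
  haveI := hi; haveI := he; haveI := hS.mono_f; haveI := hS.epi_g
  -- the subobject of `Z` coming from `X₁`
  set u : pullback i S.f ⟶ Y := pullback.fst i S.f ≫ e with hu
  set a : Abelian.coimage u ⟶ Y :=
    Abelian.coimageImageComparison u ≫ Abelian.image.ι u with ha
  haveI hamono : Mono a := mono_comp _ _
  set b : Y ⟶ cokernel a := cokernel.π a with hb
  have hab : Abelian.coimage.π u ≫ a = u := Abelian.coimage_image_factorisation u
  have sub1 : SubQuot (Abelian.coimage u) S.X₁ :=
    ⟨pullback i S.f, pullback.snd i S.f, Abelian.coimage.π u, inferInstance, inferInstance⟩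
  -- the quotient `cokernel a` is a subquotient of `X₃`
  set v : Z ⟶ S.X₃ := i ≫ S.g with hv
  have hkv : (kernel.ι v ≫ i) ≫ S.g = 0 := by
    rw [Category.assoc, ← hv, kernel.condition]
  set w₁ := hS.exact.lift (kernel.ι v ≫ i) hkv with hw₁
  have hw₁f : w₁ ≫ S.f = kernel.ι v ≫ i := hS.exact.lift_f _ _
  set kap : kernel v ⟶ pullback i S.f := pullback.lift (kernel.ι v) w₁ hw₁f.symm with hkap
  have hkfst : kap ≫ pullback.fst i S.f = kernel.ι v := pullback.lift_fst _ _ _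
  have h5 : kernel.ι v ≫ e = kap ≫ u := by
    rw [hu, ← Category.assoc, hkfst]
  have h6 : u ≫ b = 0 := by
    calc u ≫ b = (Abelian.coimage.π u ≫ a) ≫ b := by rw [hab]
      _ = Abelian.coimage.π u ≫ a ≫ b := by rw [Category.assoc]
      _ = 0 := by rw [hb, cokernel.condition, comp_zero]
  have hcd : (kernel.ι v ≫ e) ≫ b = 0 := by
    rw [h5, Category.assoc, h6, comp_zero]
  set d : Abelian.coimage v ⟶ cokernel a := cokernel.desc (kernel.ι v) (e ≫ b) (by simp only [Category.assoc] at hcd ⊢; exact hcd) with hd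
  have hdepi : Epi d := by
    have : cokernel.π (kernel.ι v) ≫ d = e ≫ b := cokernel.π_desc _ _ _
    exact epi_of_epi_fac this
  have sub3 : SubQuot (cokernel a) S.X₃ :=
    ⟨Abelian.coimage v, Abelian.coimageImageComparison v ≫ Abelian.image.ι v, d,
      mono_comp _ _, hdepi⟩
  obtain ⟨hP1, hQ1⟩ := h1 _ sub1
  obtain ⟨hP3, hQ3⟩ := h3 _ sub3
  have hexab : (ShortComplex.mk a b (cokernel.condition a)).Exact := exact_cok a
  constructor
  · -- no nonzero maps `Y ⟶ M`
    intro f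
    have h0 : a ≫ f = 0 := hP1 (a ≫ f)
    have : f = b ≫ cokernel.desc a f h0 := (cokernel.π_desc a f h0).symm
    rw [this, hP3 (cokernel.desc a f h0), comp_zero]
  · -- extensions of `M` by `Y` split
    intro E f g wfg hf hg hex
    haveI := hf; haveI := hg
    set m' : M ⟶ pullback g a := pullback.lift f 0 (by rw [wfg, zero_comp]) with hm'
    have hm'fst : m' ≫ pullback.fst g a = f := pullback.lift_fst _ _ _
    have hm'snd : m' ≫ pullback.snd g a = 0 := pullback.lift_snd _ _ _
    obtain ⟨hm'm, hsndepi, hexW⟩ := kp f g wfg hf hg hex a (pullback.fst g a)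
      (pullback.snd g a) pullback.condition (pullbackIsPullback g a) m' hm'fst hm'snd
    obtain ⟨rA, hrA⟩ := hQ1 _ m' (pullback.snd g a) hm'snd hm'm hsndepi hexW
    set ιA : kernel rA ⟶ pullback g a := kernel.ι rA with hιA
    haveI : Mono (pullback.fst g a) := inferInstance
    set uu : kernel rA ⟶ E := ιA ≫ pullback.fst g a with huu
    haveI huumono : Mono uu := mono_comp _ _
    set pii : E ⟶ cokernel uu := cokernel.π uu with hpii
    set m₂ : M ⟶ cokernel uu := f ≫ pii with hm₂
    have huugb : uu ≫ g ≫ b = 0 := by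
      calc uu ≫ g ≫ b = ιA ≫ (pullback.fst g a ≫ g) ≫ b := by
            rw [huu]; simp only [Category.assoc]
        _ = ιA ≫ (pullback.snd g a ≫ a) ≫ b := by rw [pullback.condition]
        _ = 0 := by
            simp only [Category.assoc]
            rw [hb, cokernel.condition, comp_zero, comp_zero]
    set g₂ : cokernel uu ⟶ cokernel a := cokernel.desc uu (g ≫ b)
      huugb with hg₂
    have hpig₂ : pii ≫ g₂ = g ≫ b := cokernel.π_desc _ _ _
    haveI hm₂mono : Mono m₂ := by
      rw [Preadditive.mono_iff_cancel_zero]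
      intro T t ht
      have htf : (t ≫ f) ≫ pii = 0 := by rw [Category.assoc, ← hm₂, ht]
      set w' := Abelian.monoLift uu (t ≫ f) (by rw [hpii] at htf; exact htf) with hw'
      have hw'uu : w' ≫ uu = t ≫ f := Abelian.monoLift_comp _ _ _
      have h2 : t ≫ m' = w' ≫ ιA := by
        rw [← cancel_mono (pullback.fst g a), Category.assoc, Category.assoc, hm'fst, ← huu,
          hw'uu]
      calc t = t ≫ m' ≫ rA := by rw [hrA, Category.comp_id]
        _ = (w' ≫ ιA) ≫ rA := by rw [← Category.assoc, h2]
        _ = 0 := by rw [Category.assoc, hιA, kernel.condition, comp_zero]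
    haveI hg₂epi : Epi g₂ := epi_of_epi_fac hpig₂
    have wm₂ : m₂ ≫ g₂ = 0 := by
      rw [hm₂, Category.assoc, hpig₂, ← Category.assoc, wfg, zero_comp]
    -- `g₂` is a cokernel of `m₂`
    set σ : pullback g a ⟶ kernel rA := kernel.lift rA (𝟙 _ - rA ≫ m')
      (by rw [Preadditive.sub_comp, Category.id_comp, Category.assoc, hrA,
        Category.comp_id, sub_self]) with hσ
    have hσι : σ ≫ ιA = 𝟙 _ - rA ≫ m' := kernel.lift_ι _ _ _
    have hgcok : IsColimit (CokernelCofork.ofπ g₂ wm₂) := by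
      refine CokernelCofork.IsColimit.ofπ' g₂ wm₂ (fun {T} k hk => ?_)
      have hfk : f ≫ pii ≫ k = 0 := by rw [← Category.assoc, ← hm₂, hk]
      haveI : Epi (ShortComplex.mk f g wfg).g := hg
      set s := hex.desc (pii ≫ k) hfk with hs
      have hgs : g ≫ s = pii ≫ k := hex.g_desc _ _
      have idW : rA ≫ m' + σ ≫ ιA = 𝟙 (pullback g a) := by
        rw [hσι, add_sub_cancel]
      have t1 : m' ≫ pullback.fst g a ≫ pii ≫ k = 0 := by
        rw [← Category.assoc, hm'fst, ← Category.assoc, ← hm₂, hk]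
      have t2 : ιA ≫ pullback.fst g a ≫ pii ≫ k = 0 := by
        rw [← Category.assoc, ← huu, ← Category.assoc, hpii, cokernel.condition, zero_comp]
      have hfstpik : pullback.fst g a ≫ pii ≫ k = 0 := by
        calc pullback.fst g a ≫ pii ≫ k
            = (rA ≫ m' + σ ≫ ιA) ≫ pullback.fst g a ≫ pii ≫ k := by
              rw [idW, Category.id_comp]
          _ = rA ≫ (m' ≫ pullback.fst g a ≫ pii ≫ k) +
              σ ≫ (ιA ≫ pullback.fst g a ≫ pii ≫ k) := by
              rw [Preadditive.add_comp, Category.assoc, Category.assoc]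
          _ = 0 := by rw [t1, t2, comp_zero, comp_zero, add_zero]
      have has : a ≫ s = 0 := by
        rw [← cancel_epi (pullback.snd g a), ← Category.assoc, ← pullback.condition,
          Category.assoc, hgs, comp_zero]
        exact hfstpik
      set s₃ := cokernel.desc a s has with hs₃
      have hbs₃ : b ≫ s₃ = s := cokernel.π_desc _ _ _
      refine ⟨s₃, ?_⟩
      rw [← cancel_epi pii, ← Category.assoc, hpig₂, Category.assoc, hbs₃, hgs]
    have hex₂ : (ShortComplex.mk m₂ g₂ wm₂).Exact :=
      ShortComplex.exact_of_g_is_cokernel _ hgcok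
    obtain ⟨rB, hrB⟩ := hQ3 _ m₂ g₂ wm₂ hm₂mono hg₂epi hex₂
    exact ⟨pii ≫ rB, by rw [← Category.assoc, ← hm₂, hrB]⟩

lemma tstar_colim {M : C} {J : Type v} [SmallCategory J] [IsFiltered J]
    (F : J ⥤ C) (c : Cocone F) (hc : IsColimit c) (hmem : ∀ j, F.obj j ∈ Tstar M) :
    c.pt ∈ Tstar M := by
  -- Step 1: no nonzero maps from subobjects of `c.pt` to `M`.
  have psub : ∀ (Z : C) (iz : Z ⟶ c.pt), Mono iz → ∀ φ : Z ⟶ M, φ = 0 := by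
    intro Z iz hiz φ
    haveI := hiz
    obtain ⟨hK⟩ := master F c hc iz
    apply hK.hom_ext
    intro j
    show (pullback.fst ((Functor.const J).map iz) c.ι).app j ≫ φ =
      (pullback.fst ((Functor.const J).map iz) c.ι).app j ≫ 0
    have ptl := isLimitPullbackConeMapOfIsLimit ((evaluation J C).obj j)
      pullback.condition (pullbackIsPullback ((Functor.const J).map iz) c.ι)
    have hmono : Mono ((pullback.snd ((Functor.const J).map iz) c.ι).app j) :=
      mono_snd_of_isLimit hiz ptl
    have hj := hmem j ((pullback ((Functor.const J).map iz) c.ι).obj j)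
      ⟨(pullback ((Functor.const J).map iz) c.ι).obj j,
        (pullback.snd ((Functor.const J).map iz) c.ι).app j, 𝟙 _, hmono, inferInstance⟩
    rw [comp_zero]
    exact hj.1 _
  -- Step 2: every extension of `M` by a subobject of `c.pt` splits.
  have qsub : ∀ (Z : C) (iz : Z ⟶ c.pt), Mono iz → QM M Z := by
    intro Z iz hiz E₀ m₀ g₀ w₀ hm₀ hg₀ hex₀
    haveI := hiz; haveI := hm₀; haveI := hg₀
    obtain ⟨hK⟩ := master F c hc iz
    obtain ⟨hK'⟩ := master F c hc (g₀ ≫ iz)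
    set η := (Functor.const J).map iz with hη
    set η' := (Functor.const J).map (g₀ ≫ iz) with hη'
    set p := pullback.fst η c.ι with hp
    set q := pullback.snd η c.ι with hq
    set p' := pullback.fst η' c.ι with hp'
    set q' := pullback.snd η' c.ι with hq'
    have comm : ∀ j, p.app j ≫ iz = q.app j ≫ c.ι.app j := fun j => by
      have h1 := congrArg (fun τ => NatTrans.app τ j) (pullback.condition (f := η) (g := c.ι))
      exact h1
    have comm' : ∀ j, p'.app j ≫ (g₀ ≫ iz) = q'.app j ≫ c.ι.app j := fun j => by
      have h1 := congrArg (fun τ => NatTrans.app τ j) (pullback.condition (f := η') (g := c.ι))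
      exact h1
    have ptl : ∀ j, IsLimit (PullbackCone.mk (p.app j) (q.app j) (comm j)) := fun j =>
      isLimitPullbackConeMapOfIsLimit ((evaluation J C).obj j)
        pullback.condition (pullbackIsPullback η c.ι)
    have ptl' : ∀ j, IsLimit (PullbackCone.mk (p'.app j) (q'.app j) (comm' j)) := fun j =>
      isLimitPullbackConeMapOfIsLimit ((evaluation J C).obj j)
        pullback.condition (pullbackIsPullback η' c.ι)
    have hgcomm : ∀ j, (p'.app j ≫ g₀) ≫ iz = q'.app j ≫ c.ι.app j := fun j => by
      rw [Category.assoc]; exact comm' j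
    set gj : ∀ j, (pullback η' c.ι).obj j ⟶ (pullback η c.ι).obj j := fun j =>
      PullbackCone.IsLimit.lift (ptl j) (p'.app j ≫ g₀) (q'.app j) (hgcomm j) with hgj
    have hgj1 : ∀ j, gj j ≫ p.app j = p'.app j ≫ g₀ := fun j => by
      exact PullbackCone.IsLimit.lift_fst (ptl j) (p'.app j ≫ g₀) (q'.app j) (hgcomm j)
    have hgj2 : ∀ j, gj j ≫ q.app j = q'.app j := fun j => by
      exact PullbackCone.IsLimit.lift_snd (ptl j) (p'.app j ≫ g₀) (q'.app j) (hgcomm j)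
    have hmcomm : ∀ j, m₀ ≫ (g₀ ≫ iz) = (0 : M ⟶ F.obj j) ≫ c.ι.app j := fun j => by
      rw [← Category.assoc, w₀, zero_comp, zero_comp]
    set mj : ∀ j, M ⟶ (pullback η' c.ι).obj j := fun j =>
      PullbackCone.IsLimit.lift (ptl' j) m₀ 0 (hmcomm j) with hmj
    have hmj1 : ∀ j, mj j ≫ p'.app j = m₀ := fun j => by
      exact PullbackCone.IsLimit.lift_fst (ptl' j) m₀ 0 (hmcomm j)
    have hmj2 : ∀ j, mj j ≫ q'.app j = 0 := fun j => by
      exact PullbackCone.IsLimit.lift_snd (ptl' j) m₀ 0 (hmcomm j)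
    have hmjgj : ∀ j, mj j ≫ gj j = 0 := fun j => by
      apply PullbackCone.IsLimit.hom_ext (ptl j) <;>
        simp only [PullbackCone.mk_fst, PullbackCone.mk_snd, zero_comp]
      · erw [Category.assoc, hgj1, ← Category.assoc, hmj1, w₀]; exact zero_comp.symm
      · erw [Category.assoc, hgj2, hmj2]; exact zero_comp.symm
    have hWj : ∀ j, IsLimit (PullbackCone.mk (p'.app j) (gj j) (hgj1 j).symm) := by
      intro j
      have hcond : ∀ s : PullbackCone g₀ (p.app j),
          s.fst ≫ (g₀ ≫ iz) = (s.snd ≫ q.app j) ≫ c.ι.app j := fun s => by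
        rw [← Category.assoc, s.condition, Category.assoc, Category.assoc, comm j,
          ← Category.assoc]
      have hl1 : ∀ s : PullbackCone g₀ (p.app j),
          PullbackCone.IsLimit.lift (ptl' j) s.fst (s.snd ≫ q.app j) (hcond s) ≫ p'.app j =
            s.fst := fun s => by
        simpa using PullbackCone.IsLimit.lift_fst (ptl' j) s.fst (s.snd ≫ q.app j) (hcond s)
      have hl2 : ∀ s : PullbackCone g₀ (p.app j),
          PullbackCone.IsLimit.lift (ptl' j) s.fst (s.snd ≫ q.app j) (hcond s) ≫ q'.app j =
            s.snd ≫ q.app j := fun s => by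
        simpa using PullbackCone.IsLimit.lift_snd (ptl' j) s.fst (s.snd ≫ q.app j) (hcond s)
      refine PullbackCone.IsLimit.mk _
        (fun s => PullbackCone.IsLimit.lift (ptl' j) s.fst (s.snd ≫ q.app j) (hcond s))
        ?_ ?_ ?_
      · intro s
        exact hl1 s
      · intro s
        apply PullbackCone.IsLimit.hom_ext (ptl j) <;>
          simp only [PullbackCone.mk_fst, PullbackCone.mk_snd]
        · erw [Category.assoc, hgj1, ← Category.assoc, hl1 s, s.condition]; exact rfl
        · erw [Category.assoc, hgj2, hl2 s]; exact rfl
      · intro s m hm1 hm2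
        apply PullbackCone.IsLimit.hom_ext (ptl' j) <;>
          simp only [PullbackCone.mk_fst, PullbackCone.mk_snd]
        · erw [hm1, hl1 s]
        · have left : m ≫ q'.app j = s.snd ≫ q.app j := by
            rw [← hgj2 j, ← Category.assoc, hm2]
          erw [left, hl2 s]
    have kpj : ∀ j, Mono (mj j) ∧ Epi (gj j) ∧
        (ShortComplex.mk (mj j) (gj j) (hmjgj j)).Exact := fun j =>
      kp m₀ g₀ w₀ hm₀ hg₀ hex₀ (p.app j) (p'.app j) (gj j) (hgj1 j).symm (hWj j)
        (mj j) (hmj1 j) (hmjgj j)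
    have hmonoq : ∀ j, Mono (q.app j) := fun j => mono_snd_of_isLimit hiz (ptl j)
    have hPQ : ∀ j, (∀ f : (pullback η c.ι).obj j ⟶ M, f = 0) ∧
        QM M ((pullback η c.ι).obj j) := fun j =>
      hmem j _ ⟨(pullback η c.ι).obj j, q.app j, 𝟙 _, hmonoq j, inferInstance⟩
    have hrex : ∀ j, ∃ r : (pullback η' c.ι).obj j ⟶ M, mj j ≫ r = 𝟙 M := fun j =>
      (hPQ j).2 _ (mj j) (gj j) (hmjgj j) (kpj j).1 (kpj j).2.1 (kpj j).2.2
    choose r hr using hrex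
    have hnat : ∀ {j k : J} (α : j ⟶ k), (pullback η' c.ι).map α ≫ r k = r j := by
      intro j k α
      have heq : mj j ≫ (pullback η' c.ι).map α = mj k := by
        apply PullbackCone.IsLimit.hom_ext (ptl' k) <;>
          simp only [PullbackCone.mk_fst, PullbackCone.mk_snd]
        · have hn : (pullback η' c.ι).map α ≫ p'.app k = p'.app j := by
            simpa using (p'.naturality α).symm
          erw [Category.assoc, hn, hmj1, hmj1]
        · have hn : (pullback η' c.ι).map α ≫ q'.app k = q'.app j ≫ F.map α := by
            simpa using (q'.naturality α).symm
          erw [Category.assoc, hn, ← Category.assoc, hmj2, zero_comp, hmj2]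
      have hretr : mj j ≫ (pullback η' c.ι).map α ≫ r k = 𝟙 M := by
        rw [← Category.assoc, heq, hr]
      exact retr_unique (kpj j).2.1 (kpj j).2.2 (hPQ j).1 hretr (hr j)
    set coc : Cocone (pullback η' c.ι) := ⟨M,
      { app := r, naturality := fun j k α => by simpa using hnat α }⟩ with hcoc
    set r₀ := hK'.desc coc with hr₀
    have hfac : ∀ j, p'.app j ≫ r₀ = r j := fun j => by
      simpa using hK'.fac coc j
    haveI : Nonempty J := IsFiltered.nonempty
    set j₀ := Classical.arbitrary J with hj₀
    refine ⟨r₀, ?_⟩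
    rw [← hmj1 j₀, Category.assoc, hfac j₀, hr j₀]
  -- Step 3: conclude for arbitrary subquotients.
  intro Y hY
  obtain ⟨Z, iz, ez, hiz, hez⟩ := hY
  haveI := hiz; haveI := hez
  constructor
  · intro φ
    have h0 := psub Z iz hiz (ez ≫ φ)
    rw [← cancel_epi ez, h0, comp_zero]
  · intro E f g w hf hg hex
    haveI := hf; haveI := hg
    have hlc : f ≫ g = (0 : M ⟶ Z) ≫ ez := by rw [w, zero_comp]
    set m₀ : M ⟶ pullback g ez := pullback.lift f 0 hlc with hm₀def
    have hm₀fst : m₀ ≫ pullback.fst g ez = f := pullback.lift_fst _ _ _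
    have hm₀snd : m₀ ≫ pullback.snd g ez = 0 := pullback.lift_snd _ _ _
    obtain ⟨hm₀, hsnd, hex₀⟩ := kp f g w hf hg hex ez (pullback.fst g ez)
      (pullback.snd g ez) pullback.condition (pullbackIsPullback g ez) m₀ hm₀fst hm₀snd
    obtain ⟨r₀, hr₀⟩ := qsub Z iz hiz _ m₀ (pullback.snd g ez) hm₀snd hm₀ hsnd hex₀
    have hker : kernel.ι (pullback.fst g ez) ≫ r₀ = 0 := by
      have hkmono : Mono (kernel.ι (pullback.fst g ez) ≫ pullback.snd g ez) := by
        rw [Preadditive.mono_iff_cancel_zero]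
        intro T t ht
        have h1 : (t ≫ kernel.ι (pullback.fst g ez)) ≫ pullback.fst g ez = 0 := by
          rw [Category.assoc, kernel.condition, comp_zero]
        have h2 : (t ≫ kernel.ι (pullback.fst g ez)) ≫ pullback.snd g ez = 0 := by
          rw [Category.assoc]
          exact ht
        have h3 : t ≫ kernel.ι (pullback.fst g ez) = 0 :=
          pullback.hom_ext (by rw [h1, zero_comp]) (by rw [h2, zero_comp])
        exact zero_of_comp_mono (kernel.ι (pullback.fst g ez)) h3
      haveI := hkmono
      exact psub (kernel (pullback.fst g ez))
        ((kernel.ι (pullback.fst g ez) ≫ pullback.snd g ez) ≫ iz) (mono_comp _ _) _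
    refine ⟨Abelian.epiDesc (pullback.fst g ez) r₀ hker, ?_⟩
    rw [← hm₀fst, Category.assoc, Abelian.comp_epiDesc, hr₀]

lemma tstar_localizing (M : C) : IsLocalizing (Tstar M) := by
  refine ⟨?_, ?_, ?_, ?_, ?_⟩
  · intro X Y e hX; exact tstar_iso e hX
  · intro X Y f hf hY; exact tstar_mono f hf hY
  · intro X Y f hf hX; exact tstar_epi f hf hX
  · intro S hS h1 h3; exact tstar_ext S hS h1 h3
  · intro J hsc hfil F c hcolim hmem
    letI := hsc
    letI := hfil
    exact tstar_colim F c hcolim hmem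

lemma subset_tstar {M : C} {T : Set C} (hT : IsLocalizing T) (hloc : IsLocalObject T M) :
    T ⊆ Tstar M := by
  intro X hX Y hY
  obtain ⟨Z, i, e, hi, he⟩ := hY
  have hYmem : Y ∈ T := hT.mem_of_epi e he (hT.mem_of_mono i hi hX)
  constructor
  · exact fun f => hloc.1 Y hYmem f
  · intro E f g w hf hg hex
    haveI := hf; haveI := hg
    obtain ⟨e'⟩ := cok_iso hg hex
    have hco : cokernel f ∈ T := hT.mem_of_iso e'.symm hYmem
    exact hloc.2 E f hf hco

end Aux

/-- let `C` be a locally noetherian Grothendieck category and `T_U`, `T_V`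
two localizing subcategories, with weakly open subspaces `U`, `V` given by their local
objects.  Let `U ∩ V` be given by the local objects for the smallest localizing
subcategory containing `T_U` and `T_V`.  Then an object is local for `U ∩ V` iff it is
local for both `U` and `V`: `Mod (U ∩ V) = Mod U ∩ Mod V`. -/
theorem local_for_join_iff
    [Abelian C] [HasLimits C] [HasColimits C] [HasFilteredColimits C] [AB5 C]
    (κ : Type v) (Gen : κ → C) (hsep : ObjectProperty.IsSeparating (fun G => G ∈ Set.range Gen))
    (hnoeth : ∀ i, IsNoetherianObject (Gen i))
    (TU TV : Set C) (hU : IsLocalizing TU) (hV : IsLocalizing TV) :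
    ∀ M : C,
      IsLocalObject {X | ∀ T : Set C, IsLocalizing T → TU ⊆ T → TV ⊆ T → X ∈ T} M ↔
        (IsLocalObject TU M ∧ IsLocalObject TV M) := by
  intro M
  constructor
  · intro hW
    have hsubU : TU ⊆ {X | ∀ T : Set C, IsLocalizing T → TU ⊆ T → TV ⊆ T → X ∈ T} :=
      fun X hX T hT h1 h2 => h1 hX
    have hsubV : TV ⊆ {X | ∀ T : Set C, IsLocalizing T → TU ⊆ T → TV ⊆ T → X ∈ T} :=
      fun X hX T hT h1 h2 => h2 hX
    exact ⟨⟨fun A hA f => hW.1 A (hsubU hA) f, fun E f hf hc => hW.2 E f hf (hsubU hc)⟩,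
      ⟨fun A hA f => hW.1 A (hsubV hA) f, fun E f hf hc => hW.2 E f hf (hsubV hc)⟩⟩
  · rintro ⟨hu, hv⟩
    have hloc : IsLocalizing (Tstar M) := tstar_localizing M
    have hTU : TU ⊆ Tstar M := subset_tstar hU hu
    have hTV : TV ⊆ Tstar M := subset_tstar hV hv
    constructor
    · intro A hA f
      exact (hA (Tstar M) hloc hTU hTV A (SubQuot.refl A)).1 f
    · intro E f hf hc
      have hq := (hc (Tstar M) hloc hTU hTV (cokernel f) (SubQuot.refl _)).2
      haveI := hf
      exact hq E f (cokernel.π f) (cokernel.condition f) hf inferInstance (exact_cok f)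

end NCSpaces
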